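/- Let v be a run and 𝔹 a set of valid blocks of v. If v is conflict-serializable with respect to 𝔹, then v is liberally atomic with respect to 𝔹. The converse fails: there exist a run v and a set of valid blocks 𝔹 such that v is liberally atomic but not conflict-serializable with respect to 𝔹. -/

import Mathlib

namespace TraceTheory

inductive Op : Type
  | rd : Op
  | wr : Op
deriving DecidableEq

structure Lbl (T X : Type) : Type where
  thread : T
  op : Op
  var : X
deriving DecidableEq

/-- A concurrent program run: a finite string over the concurrent alphabet. -/
abbrev Run (T X : Type) := List (Lbl T X)

/-- An event of a run: a symbol together with its occurrence number. -/
abbrev Event (T X : Type) := Lbl T X × ℕ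

variable {T X : Type} [DecidableEq T] [DecidableEq X]

/-- Dependence: same thread, or same variable with at least one write. -/
def Dep (a b : Lbl T X) : Prop :=
  a.thread = b.thread ∨ (a.var = b.var ∧ (a.op = Op.wr ∨ b.op = Op.wr))

/-- The event at position `i` of run `w`. -/
def evAt (w : Run T X) (i : Fin w.length) : Event T X :=
  (w.get i, (w.take (i : ℕ)).count (w.get i))

def HasEv (w : Run T X) (e : Event T X) : Prop := ∃ i : Fin w.length, evAt w i = e

/-- `e` occurs (strictly) before `f` in `w`. -/
def EvBefore (w : Run T X) (e f : Event T X) : Prop :=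
  ∃ i j : Fin w.length, (i : ℕ) < (j : ℕ) ∧ evAt w i = e ∧ evAt w j = f

/-- Program order. -/
def po (w : Run T X) (e f : Event T X) : Prop :=
  e.1.thread = f.1.thread ∧ EvBefore w e f

/-- Reads-from: `f` is a read that observes the write `e` (the last write on
the same variable before `f`). -/
def rf (w : Run T X) (e f : Event T X) : Prop :=
  e.1.op = Op.wr ∧ f.1.op = Op.rd ∧ e.1.var = f.1.var ∧
  ∃ i j : Fin w.length, evAt w i = e ∧ evAt w j = f ∧ (i : ℕ) < (j : ℕ) ∧
    ∀ k : Fin w.length, (i : ℕ) < (k : ℕ) → (k : ℕ) < (j : ℕ) →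
      ¬ ((w.get k).op = Op.wr ∧ (w.get k).var = f.1.var)

/-- Every read is preceded by a write on the same variable. -/
def WellFormed (w : Run T X) : Prop :=
  ∀ j : Fin w.length, (w.get j).op = Op.rd →
    ∃ i : Fin w.length, (i : ℕ) < (j : ℕ) ∧ (w.get i).op = Op.wr ∧
      (w.get i).var = (w.get j).var

/-- Reads-from equivalence. -/
def RfEquiv (w w' : Run T X) : Prop :=
  w.Perm w' ∧ po w = po w' ∧ rf w = rf w'

/-- A single Mazurkiewicz swap of two adjacent independent symbols. -/
inductive MazSwap : Run T X → Run T X → Prop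
  | swap (u v : Run T X) (a b : Lbl T X) (h : ¬ Dep a b) :
      MazSwap (u ++ a :: b :: v) (u ++ b :: a :: v)

/-- Trace (Mazurkiewicz) equivalence: the smallest equivalence closed under swaps. -/
def MazEquiv (w w' : Run T X) : Prop := Relation.EqvGen MazSwap w w'

/-- The trace (happens-before) partial order of a run. -/
def MazOrder (w : Run T X) : Event T X → Event T X → Prop :=
  Relation.TransGen (fun e f => EvBefore w e f ∧ Dep e.1 f.1)

/-- `B` is a block word (one write followed by reads of the same variable) that is
valid as a contiguous segment whose suffix (remainder of the run) is `s`: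
no read after the block reads from the block's write. -/
def ValidBlockSeg (B s : Run T X) : Prop :=
  ∃ a rest, B = a :: rest ∧ a.op = Op.wr ∧
    (∀ b ∈ rest, b.op = Op.rd ∧ b.var = a.var) ∧
    ∀ j : Fin s.length, (s.get j).op = Op.rd → (s.get j).var = a.var →
      ∃ m : Fin s.length, (m : ℕ) < (j : ℕ) ∧ (s.get m).op = Op.wr ∧
        (s.get m).var = a.var

def ThreadsDisjoint (B B' : Run T X) : Prop :=
  ∀ a ∈ B, ∀ b ∈ B', a.thread ≠ b.thread

/-- A single block-equivalence step (clause (i): block swap, clause (ii): event swap). -/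
inductive BlkSwap : Run T X → Run T X → Prop
  | block (p B B' s : Run T X) (hB : ValidBlockSeg B (B' ++ s)) (hB' : ValidBlockSeg B' s)
      (hd : ThreadsDisjoint B B') :
      BlkSwap (p ++ B ++ B' ++ s) (p ++ B' ++ B ++ s)
  | single (p s : Run T X) (a b : Lbl T X) (ht : a.thread ≠ b.thread)
      (h : a.var ≠ b.var ∨ (a.op = Op.rd ∧ b.op = Op.rd)) :
      BlkSwap (p ++ a :: b :: s) (p ++ b :: a :: s)

/-- Block equivalence: smallest reflexive transitive relation closed under the swaps. -/
def BlkEquiv : Run T X → Run T X → Prop := Relation.ReflTransGen BlkSwap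

/-- The set of events of the segment `B` of a run, given the prefix `p` preceding it. -/
def segEvents (p B : Run T X) : Set (Event T X) :=
  { e | ∃ i : Fin B.length, e = (B.get i, ((p ++ B.take (i : ℕ)).count (B.get i))) }

/-- Block-equivalence steps where block swaps are restricted to blocks from `𝔹`. -/
inductive BlkSwapIn (𝔹 : Set (Set (Event T X))) : Run T X → Run T X → Prop
  | block (p B B' s : Run T X) (hB : ValidBlockSeg B (B' ++ s)) (hB' : ValidBlockSeg B' s)
      (hBmem : segEvents p B ∈ 𝔹) (hB'mem : segEvents (p ++ B) B' ∈ 𝔹)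
      (hd : ThreadsDisjoint B B') :
      BlkSwapIn 𝔹 (p ++ B ++ B' ++ s) (p ++ B' ++ B ++ s)
  | single (p s : Run T X) (a b : Lbl T X) (ht : a.thread ≠ b.thread)
      (h : a.var ≠ b.var ∨ (a.op = Op.rd ∧ b.op = Op.rd)) :
      BlkSwapIn 𝔹 (p ++ a :: b :: s) (p ++ b :: a :: s)

/-- Block equivalence restricted to the set of blocks `𝔹`. -/
def BlkEquivIn (𝔹 : Set (Set (Event T X))) : Run T X → Run T X → Prop :=
  Relation.ReflTransGen (BlkSwapIn 𝔹)

/-- A valid block of `w` (as a set of events): a write event together with exactly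
the reads of `w` that read from it. -/
def IsValidBlockOf (w : Run T X) (S : Set (Event T X)) : Prop :=
  ∃ e : Event T X, HasEv w e ∧ e.1.op = Op.wr ∧ S = insert e { f | rf w e f }

def ValidBlocks (w : Run T X) (𝔹 : Set (Set (Event T X))) : Prop :=
  ∀ S ∈ 𝔹, IsValidBlockOf w S

/-- Block `S` occurs as a contiguous subword of `u`. -/
def SerialIn (u : Run T X) (S : Set (Event T X)) : Prop :=
  ∃ p B s, u = p ++ B ++ s ∧ segEvents p B = S

/-- Liberal atomicity of a run `v` with respect to a set of blocks `𝔹`. -/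
def LiberallyAtomic (v : Run T X) (𝔹 : Set (Set (Event T X))) : Prop :=
  ∃ u, BlkEquivIn 𝔹 u v ∧ ∀ S ∈ 𝔹, SerialIn u S

/-- Conflict serializability of a run `v` with respect to a set of blocks `𝔹`. -/
def ConflictSerializable (v : Run T X) (𝔹 : Set (Set (Event T X))) : Prop :=
  ∃ u, MazEquiv u v ∧ ∀ S ∈ 𝔹, SerialIn u S

/-- The block-happens-before order `≺_𝔹`. -/
def Bhb (w : Run T X) (𝔹 : Set (Set (Event T X))) : Event T X → Event T X → Prop :=
  Relation.TransGen (fun e f =>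
    EvBefore w e f ∧ Dep e.1 f.1 ∧
    ¬ (e.1.thread ≠ f.1.thread ∧ ∃ B ∈ 𝔹, ∃ B' ∈ 𝔹, B ≠ B' ∧ e ∈ B ∧ f ∈ B'))

/-- The saturated order `⪻_𝔹` on events (`Sum.inl`) and blocks (`Sum.inr`). -/
inductive Sat (w : Run T X) (𝔹 : Set (Set (Event T X))) :
    (Event T X ⊕ Set (Event T X)) → (Event T X ⊕ Set (Event T X)) → Prop
  | base {e f : Event T X} : Bhb w 𝔹 e f → Sat w 𝔹 (Sum.inl e) (Sum.inl f)
  | toBlk {e f : Event T X} {B B' : Set (Event T X)} :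
      e.1.var = f.1.var → B ∈ 𝔹 → B' ∈ 𝔹 → e ∈ B → f ∈ B' → B ≠ B' →
      Sat w 𝔹 (Sum.inl e) (Sum.inl f) → Sat w 𝔹 (Sum.inr B) (Sum.inr B')
  | ofBlk {B B' : Set (Event T X)} {e f : Event T X} :
      Sat w 𝔹 (Sum.inr B) (Sum.inr B') → e ∈ B → f ∈ B' →
      Sat w 𝔹 (Sum.inl e) (Sum.inl f)

/-- The event part of the saturated order `⪻_𝔹`. -/
def SatEv (w : Run T X) (𝔹 : Set (Set (Event T X))) (e f : Event T X) : Prop :=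
  Sat w 𝔹 (Sum.inl e) (Sum.inl f)

def SameVarBlocks (B B' : Set (Event T X)) : Prop :=
  ∃ x : X, (∀ e ∈ B, e.1.var = x) ∧ (∀ e ∈ B', e.1.var = x)

/-- No two distinct blocks of `𝔹` on the same variable overlap in `v`. -/
def NoOverlap (v : Run T X) (𝔹 : Set (Set (Event T X))) : Prop :=
  ∀ B ∈ 𝔹, ∀ B' ∈ 𝔹, B ≠ B' → SameVarBlocks B B' →
    (∀ e ∈ B, ∀ f ∈ B', EvBefore v e f) ∨ (∀ e ∈ B, ∀ f ∈ B', EvBefore v f e)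

/-- `v` is a proper linearization (of the events of `w`) of the order `ord`. -/
def ProperLin (w : Run T X) (𝔹 : Set (Set (Event T X)))
    (ord : Event T X → Event T X → Prop) (v : Run T X) : Prop :=
  w.Perm v ∧ (∀ e f, ord e f → EvBefore v e f) ∧ NoOverlap v 𝔹


/-- `e` is causally ordered before `f` under reads-from equivalence:
`e` occurs before `f` in every reads-from equivalent run. -/
def CausOrd (w : Run T X) (e f : Event T X) : Prop :=
  ∀ w', RfEquiv w w' → EvBefore w' e f

/-- `e` and `f` are causally concurrent under reads-from equivalence. -/
def CausConc (w : Run T X) (e f : Event T X) : Prop :=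
  ¬ CausOrd w e f ∧ ¬ CausOrd w f e

set_option linter.unusedSectionVars false

lemma mazSwap_symm {u v : Run T X} (h : MazSwap u v) : MazSwap v u := by
  cases h with
  | swap p s a b hd =>
    exact MazSwap.swap p s b a (fun hdep => hd (by
      rcases hdep with h1 | ⟨h2, h3⟩
      · exact Or.inl h1.symm
      · exact Or.inr ⟨h2.symm, h3.symm⟩))

lemma mazSwap_to_blkSwapIn (𝔹 : Set (Set (Event T X))) {u v : Run T X}
    (h : MazSwap u v) : BlkSwapIn 𝔹 u v := by
  cases h with
  | swap p s a b hd =>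
    rw [Dep] at hd
    push_neg at hd
    refine BlkSwapIn.single p s a b hd.1 ?_
    by_cases hv : a.var = b.var
    · refine Or.inr ?_
      have := hd.2 hv
      cases ha : a.op <;> cases hb : b.op <;> simp_all
    · exact Or.inl hv

lemma mazEquiv_to_reflTrans {u v : Run T X} (h : MazEquiv u v) :
    Relation.ReflTransGen MazSwap u v := by
  induction h with
  | rel a b hab => exact Relation.ReflTransGen.single hab
  | refl => exact Relation.ReflTransGen.refl
  | symm a b hab ih =>
      clear hab
      induction ih with
      | refl => exact Relation.ReflTransGen.refl
      | tail _ hstep ih2 =>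
          exact Relation.ReflTransGen.trans
            (Relation.ReflTransGen.single (mazSwap_symm hstep)) ih2
  | trans a b c _ _ ih1 ih2 => exact ih1.trans ih2

lemma mazEquiv_to_blkEquivIn (𝔹 : Set (Set (Event T X))) {u v : Run T X}
    (h : MazEquiv u v) : BlkEquivIn 𝔹 u v :=
  Relation.ReflTransGen.mono (r := MazSwap) (p := BlkSwapIn 𝔹) (fun _ _ hs => mazSwap_to_blkSwapIn 𝔹 hs) u v (mazEquiv_to_reflTrans h)

lemma mazEquiv_perm {u v : Run T X} (h : MazEquiv u v) : u.Perm v := by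
  induction h with
  | rel a b hab => cases hab with
    | swap p s a b _ => exact ((List.perm_append_left_iff p).2
        (((List.Perm.swap' _ _ (List.Perm.refl s))).append_left [])).trans (by simp)
  | refl => exact List.Perm.refl _
  | symm a b _ ih => exact ih.symm
  | trans a b c _ _ ih1 ih2 => exact ih1.trans ih2

lemma mazEquiv_filter (p : Lbl T X → Bool)
    (hP : ∀ a b, p a = true → p b = true → Dep a b) {u v : Run T X}
    (h : MazEquiv u v) : u.filter p = v.filter p := by
  induction h with
  | rel a b hab =>
      cases hab with
      | swap pre s a b hd =>
          have hnot : ¬ (p a = true ∧ p b = true) := fun ⟨ha, hb⟩ => hd (hP a b ha hb)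
          simp only [List.filter_append, List.filter_cons]
          cases ha : p a <;> cases hb : p b <;> simp_all
  | refl => rfl
  | symm a b _ ih => exact ih.symm
  | trans a b c _ _ ih1 ih2 => exact ih1.trans ih2

section ListLemmas
variable {α : Type} [DecidableEq α]

lemma filter_pair_order :
    ∀ (u : List α) (a b : α), a ≠ b →
    u.filter (fun l => decide (l = a ∨ l = b)) = [a, b] →
    u.idxOf a < u.idxOf b ∧ a ∈ u ∧ b ∈ u := by
  intro u a b hab
  induction u with
  | nil => intro h; simp at h
  | cons c t ih =>
      intro h
      rw [List.filter_cons] at h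
      by_cases hca : c = a
      · subst hca
        rw [if_pos (by simp)] at h
        have ht : t.filter (fun l => decide (l = c ∨ l = b)) = [b] := by
          simpa using h
        have hbt : b ∈ t := by
          have : b ∈ t.filter (fun l => decide (l = c ∨ l = b)) := by rw [ht]; simp
          exact List.mem_of_mem_filter this
        refine ⟨?_, by simp, by simp [hbt]⟩
        rw [List.idxOf_cons, List.idxOf_cons]
        have h1 : (c == c) = true := by simp
        cases hcb : (c == b) with
        | true => exact absurd hcb (by simpa using hab)
        | false => simp [h1, hcb]
      · by_cases hcb : c = b
        · subst hcb
          rw [if_pos (by simp)] at h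
          injection h with h1 h2
          exact absurd h1 hca
        · rw [if_neg (by simp [hca, hcb])] at h
          obtain ⟨h1, h2, h3⟩ := ih h
          refine ⟨?_, by simp [h2], by simp [h3]⟩
          rw [List.idxOf_cons, List.idxOf_cons]
          have e1 : (c == a) = false := by simpa using hca
          have e2 : (c == b) = false := by simpa using hcb
          simp [e1, e2]; omega

lemma pair_list {seg : List α} {a b : α}
    (hnd : seg.Nodup) (ha : a ∈ seg) (hb : b ∈ seg) (hab : a ≠ b)
    (hsub : ∀ l ∈ seg, l = a ∨ l = b) : seg = [a, b] ∨ seg = [b, a] := by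
  match seg, hnd with
  | [], _ => simp at ha
  | [c], _ =>
      simp at ha hb; subst ha; exact absurd hb.symm hab
  | c :: d :: t, hnd =>
      have hc := hsub c (by simp)
      have hd := hsub d (by simp)
      have hcd : c ≠ d := by
        intro h; subst h; exact (List.nodup_cons.1 hnd).1 (by simp)
      have ht : t = [] := by
        cases t with
        | nil => rfl
        | cons e t' =>
            have he := hsub e (by simp)
            exfalso
            rcases hc with rfl | rfl <;> rcases hd with rfl | rfl <;>
              rcases he with rfl | rfl <;> simp_all
      subst ht
      rcases hc with rfl | rfl <;> rcases hd with rfl | rfl <;> simp_all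

lemma indexOf_adj {p s : List α} {a b : α}
    (hnd : (p ++ ([a, b] ++ s)).Nodup) :
    (p ++ ([a, b] ++ s)).idxOf a = p.length ∧
    (p ++ ([a, b] ++ s)).idxOf b = p.length + 1 := by
  have hna : a ∉ p := by
    intro h
    rw [List.nodup_append'] at hnd
    exact hnd.2.2 h (by simp)
  have hnb : b ∉ p := by
    intro h
    rw [List.nodup_append'] at hnd
    exact hnd.2.2 h (by simp)
  have hab : a ≠ b := by
    rw [List.nodup_append] at hnd
    have := hnd.2.1
    simp at this
    exact this.1.1
  constructor
  · rw [List.idxOf_append_of_notMem hna]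
    simp [List.idxOf_cons]
  · rw [List.idxOf_append_of_notMem hnb]
    have hba : (a == b) = false := by simpa using hab
    show _ + List.idxOf b (a :: b :: s) = _
    rw [List.idxOf_cons]
    simp [hba, List.idxOf_cons]

end ListLemmas

lemma segEvents_pair (p : Run T X) (a b : Lbl T X)
    (hap : a ∉ p) (hbp : b ∉ p) (hab : a ≠ b) :
    segEvents p [a, b] = {((a : Lbl T X), (0 : ℕ)), (b, 0)} := by
  ext e
  simp only [segEvents, Set.mem_setOf_eq, Set.mem_insert_iff, Set.mem_singleton_iff]
  constructor
  · rintro ⟨i, rfl⟩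
    fin_cases i
    · left
      simp [List.count_eq_zero.2 hap]
    · right
      simp [List.count_append, List.count_eq_zero.2 hbp, List.count_cons, hab]
  · rintro (rfl | rfl)
    · exact ⟨⟨0, by simp⟩, by simp [List.count_eq_zero.2 hap]⟩
    · refine ⟨⟨1, by simp⟩, ?_⟩
      simp [List.count_append, List.count_eq_zero.2 hbp, List.count_cons, hab]

lemma label_mem_of_segEvents {p seg : Run T X} {l : Lbl T X} {n : ℕ}
    (h : (l, n) ∈ segEvents p seg) : l ∈ seg := by
  obtain ⟨i, hi⟩ := h
  have : seg.get i = l := by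
    have := congrArg Prod.fst hi
    simpa using this.symm
  exact this ▸ List.get_mem _ _

lemma segEvents_label_cases {p seg : Run T X} {l : Lbl T X}
    {S : Set (Event T X)} (hS : segEvents p seg = S)
    (h : l ∈ seg) : ∃ n, (l, n) ∈ S := by
  obtain ⟨i, rfl⟩ := List.mem_iff_get.1 h
  refine ⟨(p ++ seg.take (i : ℕ)).count (seg.get i), ?_⟩
  rw [← hS]
  exact ⟨i, rfl⟩

lemma serial_adj {u : Run T X} {a b : Lbl T X}
    (hnd : u.Nodup) (hab : a ≠ b)
    (h : SerialIn u {((a : Lbl T X), (0:ℕ)), (b, 0)}) :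
    u.idxOf b = u.idxOf a + 1 ∨ u.idxOf a = u.idxOf b + 1 := by
  obtain ⟨p, seg, s, hu, hseg⟩ := h
  have hu' : u = p ++ (seg ++ s) := by rw [hu]; simp
  have hnd' : (p ++ (seg ++ s)).Nodup := hu' ▸ hnd
  have hsegnd : seg.Nodup := by
    rw [List.nodup_append, List.nodup_append] at hnd'
    exact hnd'.2.1.1
  have ha : a ∈ seg := label_mem_of_segEvents (l := a) (n := 0) (by rw [hseg]; simp)
  have hb : b ∈ seg := label_mem_of_segEvents (l := b) (n := 0) (by rw [hseg]; simp)
  have hsub : ∀ l ∈ seg, l = a ∨ l = b := by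
    intro l hl
    obtain ⟨n, hn⟩ := segEvents_label_cases hseg hl
    simp only [Set.mem_insert_iff, Set.mem_singleton_iff, Prod.mk.injEq] at hn
    rcases hn with ⟨h1, _⟩ | ⟨h1, _⟩
    · exact Or.inl h1
    · exact Or.inr h1
  rcases pair_list hsegnd ha hb hab hsub with rfl | rfl
  · obtain ⟨h1, h2⟩ := indexOf_adj (hu' ▸ hnd)
    rw [hu', h1, h2]; omega
  · obtain ⟨h1, h2⟩ := indexOf_adj (hu' ▸ hnd)
    rw [hu', h1, h2]; omega

namespace Ex

def w1 : Lbl (Fin 5) (Fin 5) := ⟨0, Op.wr, 0⟩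
def r1 : Lbl (Fin 5) (Fin 5) := ⟨2, Op.rd, 0⟩
def w2 : Lbl (Fin 5) (Fin 5) := ⟨1, Op.wr, 0⟩
def r2 : Lbl (Fin 5) (Fin 5) := ⟨3, Op.rd, 0⟩
def wc : Lbl (Fin 5) (Fin 5) := ⟨0, Op.wr, 1⟩
def rc : Lbl (Fin 5) (Fin 5) := ⟨3, Op.rd, 1⟩

def v : Run (Fin 5) (Fin 5) := [wc, w1, r1, w2, r2, rc]
def u : Run (Fin 5) (Fin 5) := [w2, r2, wc, rc, w1, r1]

def Bs : Set (Event (Fin 5) (Fin 5)) := {(w1, 0), (r1, 0)}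
def B's : Set (Event (Fin 5) (Fin 5)) := {(w2, 0), (r2, 0)}
def Cs : Set (Event (Fin 5) (Fin 5)) := {(wc, 0), (rc, 0)}

def Bl : Set (Set (Event (Fin 5) (Fin 5))) := {Bs, B's, Cs}

lemma valid_blocks : ValidBlocks v Bl := by
  intro S hS
  rcases hS with rfl | rfl | rfl
  · refine ⟨(w1, 0), ⟨⟨1, by decide⟩, by decide⟩, by decide, ?_⟩
    ext f
    simp only [Bs, Set.mem_insert_iff, Set.mem_singleton_iff, Set.mem_setOf_eq]
    constructor
    · rintro (rfl | rfl)
      · exact Or.inl rfl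
      · exact Or.inr ⟨by decide, by decide, by decide, ⟨1, by decide⟩, ⟨2, by decide⟩,
          by decide, by decide, by decide, by decide⟩
    · rintro (rfl | ⟨hw, hrd, hvar, i, j, hi, hj, hij, hk⟩)
      · exact Or.inl rfl
      · subst hj
        fin_cases i <;> try exact absurd hi (by decide)
        fin_cases j <;> first
          | exact absurd hrd (by decide)
          | exact absurd hvar (by decide)
          | (right; decide)
          | exact absurd (hk ⟨3, by decide⟩ (by decide) (by decide)) (by decide)
  · refine ⟨(w2, 0), ⟨⟨3, by decide⟩, by decide⟩, by decide, ?_⟩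
    ext f
    simp only [B's, Set.mem_insert_iff, Set.mem_singleton_iff, Set.mem_setOf_eq]
    constructor
    · rintro (rfl | rfl)
      · exact Or.inl rfl
      · exact Or.inr ⟨by decide, by decide, by decide, ⟨3, by decide⟩, ⟨4, by decide⟩,
          by decide, by decide, by decide, by decide⟩
    · rintro (rfl | ⟨hw, hrd, hvar, i, j, hi, hj, hij, hk⟩)
      · exact Or.inl rfl
      · subst hj
        fin_cases i <;> try exact absurd hi (by decide)
        fin_cases j <;> first
          | exact absurd hrd (by decide)
          | exact absurd hvar (by decide)
          | exact absurd hij (by decide)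
          | (right; decide)
  · refine ⟨(wc, 0), ⟨⟨0, by decide⟩, by decide⟩, by decide, ?_⟩
    ext f
    simp only [Cs, Set.mem_insert_iff, Set.mem_singleton_iff, Set.mem_setOf_eq]
    constructor
    · rintro (rfl | rfl)
      · exact Or.inl rfl
      · exact Or.inr ⟨by decide, by decide, by decide, ⟨0, by decide⟩, ⟨5, by decide⟩,
          by decide, by decide, by decide, by decide⟩
    · rintro (rfl | ⟨hw, hrd, hvar, i, j, hi, hj, hij, hk⟩)
      · exact Or.inl rfl
      · subst hj
        fin_cases i <;> try exact absurd hi (by decide)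
        fin_cases j <;> first
          | exact absurd hrd (by decide)
          | exact absurd hvar (by decide)
          | exact absurd hij (by decide)
          | (right; decide)

end Ex

namespace Ex

lemma seg1 : segEvents ([] : Run (Fin 5) (Fin 5)) [w2, r2] = B's :=
  segEvents_pair _ _ _ (by simp) (by simp) (by decide)

lemma seg2 : segEvents [w2, r2] [wc, rc] = Cs :=
  segEvents_pair _ _ _ (by decide) (by decide) (by decide)

lemma seg3 : segEvents [w2, r2, wc, rc] [w1, r1] = Bs :=
  segEvents_pair _ _ _ (by decide) (by decide) (by decide)

lemma seg4 : segEvents [wc] [w2, r2] = B's :=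
  segEvents_pair _ _ _ (by decide) (by decide) (by decide)

lemma seg5 : segEvents [wc, w2, r2] [w1, r1] = Bs :=
  segEvents_pair _ _ _ (by decide) (by decide) (by decide)

lemma lib_atomic : LiberallyAtomic v Bl := by
  refine ⟨u, ?_, ?_⟩
  · have s1 : BlkSwapIn Bl u [w2, r2, wc, w1, rc, r1] :=
      BlkSwapIn.single [w2, r2, wc] [r1] rc w1 (by decide) (by decide)
    have s2 : BlkSwapIn Bl [w2, r2, wc, w1, rc, r1] [w2, r2, wc, w1, r1, rc] :=
      BlkSwapIn.single [w2, r2, wc, w1] [] rc r1 (by decide) (by decide)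
    have s3 : BlkSwapIn Bl [w2, r2, wc, w1, r1, rc] [w2, wc, r2, w1, r1, rc] :=
      BlkSwapIn.single [w2] [w1, r1, rc] r2 wc (by decide) (by decide)
    have s4 : BlkSwapIn Bl [w2, wc, r2, w1, r1, rc] [wc, w2, r2, w1, r1, rc] :=
      BlkSwapIn.single [] [r2, w1, r1, rc] w2 wc (by decide) (by decide)
    have s5 : BlkSwapIn Bl [wc, w2, r2, w1, r1, rc] v := by
      have := BlkSwapIn.block (𝔹 := Bl) [wc] [w2, r2] [w1, r1] [rc]
        ⟨w2, [r2], rfl, by decide, by decide, by decide⟩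
        ⟨w1, [r1], rfl, by decide, by decide, by decide⟩
        (by rw [seg4]; simp [Bl]) (by rw [(by rfl : ([wc] ++ [w2, r2] : Run (Fin 5) (Fin 5)) = [wc, w2, r2]), seg5]; simp [Bl])
        (by intro a ha b hb; simp at ha hb; rcases ha with rfl|rfl <;> rcases hb with rfl|rfl <;> decide)
      exact this
    exact Relation.ReflTransGen.head s1 (Relation.ReflTransGen.head s2
      (Relation.ReflTransGen.head s3 (Relation.ReflTransGen.head s4
        (Relation.ReflTransGen.single s5))))
  · intro S hS
    rcases hS with rfl | rfl | rfl
    · exact ⟨[w2, r2, wc, rc], [w1, r1], [], by decide, seg3⟩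
    · exact ⟨[], [w2, r2], [wc, rc, w1, r1], by decide, seg1⟩
    · exact ⟨[w2, r2], [wc, rc], [w1, r1], by decide, seg2⟩

end Ex

instance depDecidable (a b : Lbl T X) : Decidable (Dep a b) := by
  unfold Dep; infer_instance

namespace Ex

lemma not_cs : ¬ ConflictSerializable v Bl := by
  rintro ⟨u', hmaz, hser⟩
  have hperm : u'.Perm v := mazEquiv_perm hmaz
  have hnd : u'.Nodup := hperm.nodup_iff.mpr (by decide)
  have key : ∀ (a b : Lbl (Fin 5) (Fin 5)), Dep a b → Dep b a → Dep a a → Dep b b →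
      v.filter (fun l => decide (l = a ∨ l = b)) = [a, b] → a ≠ b →
      u'.idxOf a < u'.idxOf b := by
    intro a b h1 h2 h3 h4 hv hab
    have hf : u'.filter (fun l => decide (l = a ∨ l = b)) = [a, b] := by
      rw [← hv]
      refine mazEquiv_filter _ ?_ hmaz
      intro l m hl hm
      simp only [decide_eq_true_eq] at hl hm
      rcases hl with rfl | rfl <;> rcases hm with rfl | rfl <;> assumption
    exact (filter_pair_order u' a b hab hf).1
  have o1 : u'.idxOf wc < u'.idxOf w1 :=
    key wc w1 (by decide) (by decide) (by decide) (by decide) (by decide) (by decide)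
  have o2 : u'.idxOf w1 < u'.idxOf w2 :=
    key w1 w2 (by decide) (by decide) (by decide) (by decide) (by decide) (by decide)
  have o3 : u'.idxOf w2 < u'.idxOf r2 :=
    key w2 r2 (by decide) (by decide) (by decide) (by decide) (by decide) (by decide)
  have o4 : u'.idxOf r2 < u'.idxOf rc :=
    key r2 rc (by decide) (by decide) (by decide) (by decide) (by decide) (by decide)
  have o5 : u'.idxOf wc < u'.idxOf rc :=
    key wc rc (by decide) (by decide) (by decide) (by decide) (by decide) (by decide)
  have a1 : u'.idxOf r2 = u'.idxOf w2 + 1 ∨ u'.idxOf w2 = u'.idxOf r2 + 1 :=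
    serial_adj hnd (by decide) (hser B's (by simp [Bl]))
  have a2 : u'.idxOf rc = u'.idxOf wc + 1 ∨ u'.idxOf wc = u'.idxOf rc + 1 :=
    serial_adj hnd (by decide) (hser Cs (by simp [Bl]))
  omega

end Ex

/-- conflict serializability implies liberal atomicity, and the
converse fails (witnessed over an alphabet of 5 threads and 5 variables). -/
theorem conflict_serializable_implies_liberally_atomic_not_conversely :
    (∀ (T X : Type) [DecidableEq T] [DecidableEq X]
       (v : Run T X) (𝔹 : Set (Set (Event T X))),
       ValidBlocks v 𝔹 → ConflictSerializable v 𝔹 → LiberallyAtomic v 𝔹) ∧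
    (∃ (v : Run (Fin 5) (Fin 5)) (𝔹 : Set (Set (Event (Fin 5) (Fin 5)))),
       ValidBlocks v 𝔹 ∧ LiberallyAtomic v 𝔹 ∧ ¬ ConflictSerializable v 𝔹) := by
  constructor
  · intro T X _ _ v 𝔹 _ ⟨u, hmaz, hser⟩
    exact ⟨u, mazEquiv_to_blkEquivIn 𝔹 hmaz, hser⟩
  · exact ⟨Ex.v, Ex.Bl, Ex.valid_blocks, Ex.lib_atomic, Ex.not_cs⟩

end TraceTheory
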